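/- Let M be an m×n integer matrix with m ≥ n, ψ : ℤⁿ → ℤᵐ the map given by M, and ψ' : ℤᵐ → ℤⁿ the map given by the transpose ᵗM. Let A₁ = coker(ψ) and A₂ = coker(ψ'). Then A₁ ≅ ℤ^{m−n} ⊕ A₂ as abelian groups. -/

import Mathlib

open Matrix

/-- The "Smith diagonal" `m × n` integer matrix whose diagonal starts with the
entries of the list `d` and continues with zeros. -/
def SmithDiag (m n : ℕ) (d : List ℤ) : Matrix (Fin m) (Fin n) ℤ :=
  Matrix.of fun i j =>
    if h : (i : ℕ) = (j : ℕ) ∧ (i : ℕ) < d.length then d.get ⟨i, h.2⟩ else 0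

/-- `d` is the list of (nonzero) elementary divisors of the integer matrix `M`:
`d₁ ∣ d₂ ∣ ⋯ ∣ d_l` are all nonzero and there are `P ∈ GL(m, ℤ)`, `Q ∈ GL(n, ℤ)`
with `P * M * Q` in Smith normal form with diagonal `d` followed by zeros. -/
def ElemDivisors {m n : ℕ} (M : Matrix (Fin m) (Fin n) ℤ) (d : List ℤ) : Prop :=
  d.length ≤ min m n ∧ (∀ x ∈ d, x ≠ 0) ∧ List.Chain' (· ∣ ·) d ∧
    ∃ (P : Matrix (Fin m) (Fin m) ℤ) (Q : Matrix (Fin n) (Fin n) ℤ),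
      IsUnit P.det ∧ IsUnit Q.det ∧ P * M * Q = SmithDiag m n d

namespace Stmt4Aux


/-- diagonal entry function -/
def dL (d : List ℤ) (i : ℕ) : ℤ := if h : i < d.length then d.get ⟨i, h⟩ else 0

lemma smithDiag_apply (m n : ℕ) (d : List ℤ) (i : Fin m) (j : Fin n) :
    SmithDiag m n d i j = if (i : ℕ) = (j : ℕ) then dL d (i : ℕ) else 0 := by
  simp only [SmithDiag, of_apply, dL]
  by_cases h : (i : ℕ) = (j : ℕ) <;> by_cases h2 : (i : ℕ) < d.length <;> simp [h, h2]

lemma smithDiag_transpose (m n : ℕ) (d : List ℤ) :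
    (SmithDiag m n d)ᵀ = SmithDiag n m d := by
  ext i j
  rw [transpose_apply, smithDiag_apply, smithDiag_apply]
  rcases eq_or_ne (i : ℕ) (j : ℕ) with h | h
  · simp [h]
  · simp [h, Ne.symm h]

lemma range_smithDiag (p q : ℕ) (d : List ℤ) (hq : d.length ≤ q) :
    LinearMap.range (SmithDiag p q d).mulVecLin =
      Submodule.pi Set.univ (fun i : Fin p => Ideal.span {dL d (i : ℕ)}) := by
  have hmv : ∀ (v : Fin q → ℤ) (i : Fin p),
      (SmithDiag p q d).mulVecLin v i =
        dL d (i : ℕ) * (if h : (i : ℕ) < q then v ⟨i, h⟩ else 0) := by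
    intro v i
    rw [mulVecLin_apply, mulVec, dotProduct]
    by_cases h : (i : ℕ) < q
    · rw [dif_pos h, Finset.sum_eq_single ⟨(i : ℕ), h⟩]
      · rw [smithDiag_apply]; simp
      · intro b _ hb
        rw [smithDiag_apply, if_neg, zero_mul]
        intro hc; exact hb (by ext; simp [← hc])
      · simp
    · rw [dif_neg h, mul_zero]
      apply Finset.sum_eq_zero
      intro b _
      rw [smithDiag_apply, if_neg, zero_mul]
      intro hc; exact h (hc ▸ b.2)
  ext w
  simp only [LinearMap.mem_range, Submodule.mem_pi, Set.mem_univ, forall_true_left,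
    Ideal.mem_span_singleton]
  constructor
  · rintro ⟨v, rfl⟩ i
    rw [hmv]
    exact Dvd.intro _ rfl
  · intro hw
    choose c hc using hw
    refine ⟨fun j => if h : (j : ℕ) < p then c ⟨j, h⟩ else 0, ?_⟩
    funext i
    rw [hmv]
    by_cases h : (i : ℕ) < q
    · rw [dif_pos h]
      rw [dif_pos (show ((⟨(i : ℕ), h⟩ : Fin q) : ℕ) < p from i.2)]
      exact (hc i).symm
    · rw [dif_neg h, mul_zero]
      have hlen : ¬ (i : ℕ) < d.length := fun hh => h (lt_of_lt_of_le hh hq)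
      have : dL d (i : ℕ) = 0 := by simp [dL, hlen]
      rw [hc i, this, zero_mul]



lemma exists_perm {r m : ℕ} (f g : Fin r ↪ Fin m) :
    ∃ σ : Equiv.Perm (Fin m), ∀ i, σ (f i) = g i := by
  classical
  have hcard : Fintype.card ((Set.range ⇑f)ᶜ : Set (Fin m)) =
      Fintype.card ((Set.range ⇑g)ᶜ : Set (Fin m)) := by
    rw [Fintype.card_compl_set, Fintype.card_compl_set,
      ← Fintype.card_congr f.toEquivRange, ← Fintype.card_congr g.toEquivRange]
  refine ⟨(Equiv.Set.sumCompl (Set.range ⇑f)).symm.trans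
    ((Equiv.sumCongr (f.toEquivRange.symm.trans g.toEquivRange)
      (Fintype.equivOfCardEq hcard)).trans (Equiv.Set.sumCompl (Set.range ⇑g))), ?_⟩
  intro i
  simp only [Equiv.trans_apply]
  rw [Equiv.Set.sumCompl_symm_apply_of_mem (Set.mem_range_self i)]
  have h1 : f.toEquivRange.symm ⟨f i, Set.mem_range_self i⟩ = i := by
    apply f.toEquivRange.injective; apply Subtype.ext
    simp [Function.Embedding.toEquivRange]
  simp [h1, Function.Embedding.toEquivRange]

noncomputable def unitEquiv {p : ℕ} (u : (Matrix (Fin p) (Fin p) ℤ)ˣ) :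
    (Fin p → ℤ) ≃ₗ[ℤ] (Fin p → ℤ) :=
  LinearEquiv.ofLinear (u : Matrix (Fin p) (Fin p) ℤ).mulVecLin
    (↑u⁻¹ : Matrix (Fin p) (Fin p) ℤ).mulVecLin
    (by rw [← Matrix.mulVecLin_mul, Units.mul_inv, Matrix.mulVecLin_one])
    (by rw [← Matrix.mulVecLin_mul, Units.inv_mul, Matrix.mulVecLin_one])

noncomputable def cokerEquiv {p q : ℕ} {A B : Matrix (Fin p) (Fin q) ℤ}
    (u : (Matrix (Fin p) (Fin p) ℤ)ˣ) (v : (Matrix (Fin q) (Fin q) ℤ)ˣ)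
    (h : (u : Matrix (Fin p) (Fin p) ℤ) * A * (v : Matrix (Fin q) (Fin q) ℤ) = B) :
    ((Fin p → ℤ) ⧸ LinearMap.range A.mulVecLin) ≃ₗ[ℤ]
      ((Fin p → ℤ) ⧸ LinearMap.range B.mulVecLin) := by
  refine Submodule.Quotient.equiv _ _ (unitEquiv u) ?_
  have hB : B.mulVecLin = (u : Matrix (Fin p) (Fin p) ℤ).mulVecLin ∘ₗ
      (A.mulVecLin ∘ₗ (v : Matrix (Fin q) (Fin q) ℤ).mulVecLin) := by
    rw [← Matrix.mulVecLin_mul, ← Matrix.mulVecLin_mul, ← Matrix.mul_assoc, h]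
  have hv : Function.Surjective ((v : Matrix (Fin q) (Fin q) ℤ)).mulVecLin :=
    (unitEquiv v).surjective
  rw [hB, LinearMap.range_comp, LinearMap.range_comp, LinearMap.range_eq_top.mpr hv,
    Submodule.map_top]
  rfl



lemma dL_ofFn {r : ℕ} (a : Fin r → ℤ) (x : ℕ) :
    dL (List.ofFn a) x = if h : x < r then a ⟨x, h⟩ else 0 := by
  simp only [dL, List.length_ofFn]
  split_ifs with h
  · rw [List.get_ofFn]
    congr 1
  · rfl

lemma exists_snf {m n : ℕ} (M : Matrix (Fin m) (Fin n) ℤ) :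
    ∃ (r : ℕ) (a : Fin r → ℤ) (P : (Matrix (Fin m) (Fin m) ℤ)ˣ)
      (Q : (Matrix (Fin n) (Fin n) ℤ)ˣ), r ≤ m ∧ r ≤ n ∧
      (P : Matrix (Fin m) (Fin m) ℤ) * M * (Q : Matrix (Fin n) (Fin n) ℤ) =
        SmithDiag m n (List.ofFn a) := by
  classical
  set ψ := M.mulVecLin with hψdef
  obtain ⟨r, snf⟩ := Submodule.smithNormalForm (Pi.basisFun ℤ (Fin m)) (LinearMap.range ψ)
  have hrm : r ≤ m := by simpa using Fintype.card_le_of_embedding snf.f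
  obtain ⟨σ, hσ⟩ := exists_perm snf.f (Fin.castLEEmb hrm)
  set bM' := snf.bM.reindex σ with hbM'
  have hbM'c : ∀ i : Fin r, bM' (Fin.castLE hrm i) = snf.bM (snf.f i) := by
    intro i
    have h2 := hσ i
    rw [Fin.castLEEmb_apply] at h2
    rw [hbM', Module.Basis.reindex_apply, ← h2, Equiv.symm_apply_apply]
  obtain ⟨k, bK⟩ := Submodule.basisOfPid (Pi.basisFun ℤ (Fin n)) (LinearMap.ker ψ)
  have hmem : ∀ i : Fin r, ((snf.bN i : Fin m → ℤ)) ∈ LinearMap.range ψ := fun i => (snf.bN i).2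
  choose c hc using fun i => LinearMap.mem_range.mp (hmem i)
  set s : (LinearMap.range ψ) →ₗ[ℤ] (Fin n → ℤ) := snf.bN.constr ℤ c with hs
  have hsb : ∀ i, s (snf.bN i) = c i := fun i => snf.bN.constr_basis ℤ c i
  have hψs : ∀ y : LinearMap.range ψ, ψ (s y) = (y : Fin m → ℤ) := by
    have hco : ψ ∘ₗ s = (LinearMap.range ψ).subtype := by
      apply snf.bN.ext
      intro i
      simp [hs, hc]
    intro y
    exact congrArg (fun f => f y) (congrArg DFunLike.coe hco)
  set ρ := ψ.rangeRestrict with hρ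
  have hρc : ∀ x, (ρ x : Fin m → ℤ) = ψ x := fun x => rfl
  have hτ0 : ∀ x, ψ (x - s (ρ x)) = 0 := by
    intro x
    rw [map_sub, hψs (ρ x), hρc, sub_self]
  set τ : (Fin n → ℤ) →ₗ[ℤ] LinearMap.ker ψ :=
    LinearMap.codRestrict (LinearMap.ker ψ) (LinearMap.id - s ∘ₗ ρ)
      (fun x => by simpa using hτ0 x) with hτdef
  have hτc : ∀ x, (τ x : Fin n → ℤ) = x - s (ρ x) := fun x => rfl
  set g : (LinearMap.range ψ × LinearMap.ker ψ) →ₗ[ℤ] (Fin n → ℤ) :=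
    s ∘ₗ LinearMap.fst ℤ _ _ + (LinearMap.ker ψ).subtype ∘ₗ LinearMap.snd ℤ _ _ with hg
  have hgc : ∀ (y : LinearMap.range ψ) (z : LinearMap.ker ψ), g (y, z) = s y + ↑z := by
    intro y z; simp [hg]
  set h : (Fin n → ℤ) →ₗ[ℤ] (LinearMap.range ψ × LinearMap.ker ψ) := LinearMap.prod ρ τ with hh
  have key : ∀ (y : LinearMap.range ψ) (z : LinearMap.ker ψ), ρ (s y + ↑z) = y := by
    intro y z
    apply Subtype.ext
    rw [hρc, map_add, hψs y, LinearMap.mem_ker.mp z.2, add_zero]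
  have hgh : g ∘ₗ h = LinearMap.id := by
    apply LinearMap.ext; intro x
    show g (ρ x, τ x) = x
    rw [hgc, hτc, add_sub_cancel]
  have hhg : h ∘ₗ g = LinearMap.id := by
    apply LinearMap.ext; rintro ⟨y, z⟩
    show (ρ (g (y, z)), τ (g (y, z))) = (y, z)
    rw [hgc]
    refine Prod.ext ?_ ?_
    · show ρ (s y + ↑z) = y
      exact key y z
    · show τ (s y + ↑z) = z
      apply Subtype.ext
      rw [hτc, key y z, add_sub_cancel_left]
  set e : (Fin n → ℤ) ≃ₗ[ℤ] (LinearMap.range ψ × LinearMap.ker ψ) :=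
    LinearEquiv.ofLinear h g hhg hgh with he
  have hesymm : ∀ p, e.symm p = g p := fun p => rfl
  set bQ : Module.Basis (Fin r ⊕ Fin k) ℤ (Fin n → ℤ) := (snf.bN.prod bK).map e.symm with hbQ
  have hbQl : ∀ i : Fin r, bQ (Sum.inl i) = c i := by
    intro i
    rw [hbQ, Module.Basis.map_apply, hesymm]
    have : (snf.bN.prod bK) (Sum.inl i) = (snf.bN i, 0) := by
      simp [Module.Basis.prod_apply]
    rw [this, hgc, ZeroMemClass.coe_zero, add_zero, hsb]
  have hbQr : ∀ j : Fin k, bQ (Sum.inr j) = (bK j : Fin n → ℤ) := by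
    intro j
    rw [hbQ, Module.Basis.map_apply, hesymm]
    have : (snf.bN.prod bK) (Sum.inr j) = (0, bK j) := by
      simp [Module.Basis.prod_apply]
    rw [this, hgc, map_zero, zero_add]
  have hn : r + k = n := by
    have h1 := Module.finrank_eq_card_basis bQ
    have h2 : Module.finrank ℤ (Fin n → ℤ) = n := by simp
    simp [h2] at h1
    omega
  set eQ : (Fin r ⊕ Fin k) ≃ Fin n := finSumFinEquiv.trans (finCongr hn) with heQ
  set bQ' := bQ.reindex eQ with hbQ'
  have hD : LinearMap.toMatrix bQ' bM' ψ = SmithDiag m n (List.ofFn snf.a) := by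
    ext j l
    obtain ⟨z, rfl⟩ := eQ.surjective l
    rw [LinearMap.toMatrix_apply, hbQ', Module.Basis.reindex_apply, Equiv.symm_apply_apply]
    cases z with
    | inl i =>
      have hcoe : ((eQ (Sum.inl i) : Fin n) : ℕ) = (i : ℕ) := by simp [heQ]
      rw [hbQl i, hc i, snf.snf i, ← hbM'c i, _root_.map_smul]
      rw [smithDiag_apply, hcoe, dL_ofFn]
      simp only [Finsupp.smul_apply, Module.Basis.repr_self, smul_eq_mul]
      rw [Finsupp.single_apply]
      by_cases hji : (j : ℕ) = (i : ℕ)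
      · have hjr : (j : ℕ) < r := by rw [hji]; exact i.2
        rw [if_pos (show Fin.castLE hrm i = j from by ext; exact hji.symm), mul_one,
          if_pos hji, dif_pos hjr]
        congr 1
        ext
        exact hji.symm
      · rw [if_neg (fun hh => hji (by rw [← hh]; rfl)), mul_zero, if_neg hji]
    | inr j' =>
      have hcoe : ((eQ (Sum.inr j') : Fin n) : ℕ) = r + (j' : ℕ) := by simp [heQ]
      rw [hbQr j']
      have hk0 : ψ (bK j' : Fin n → ℤ) = 0 := LinearMap.mem_ker.mp (bK j').2
      rw [hk0, map_zero, smithDiag_apply, hcoe, dL_ofFn]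
      simp only [Finsupp.coe_zero, Pi.zero_apply]
      split_ifs with h1 h2
      · exfalso; omega
      · rfl
      · rfl
  set Bm := Pi.basisFun ℤ (Fin m) with hBm
  set Bn := Pi.basisFun ℤ (Fin n) with hBn
  have hMmat : LinearMap.toMatrix Bn Bm ψ = M := by
    ext i j
    rw [LinearMap.toMatrix_apply, hBm, Pi.basisFun_repr, hψdef, mulVecLin_apply, hBn,
      Pi.basisFun_apply]
    simp [mulVec_single]
  set Pmat := LinearMap.toMatrix Bm bM' LinearMap.id with hPmat
  set Pinv := LinearMap.toMatrix bM' Bm LinearMap.id with hPinv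
  have hP1 : Pmat * Pinv = 1 := by
    rw [hPmat, hPinv, ← LinearMap.toMatrix_comp bM' Bm bM', LinearMap.id_comp,
      LinearMap.toMatrix_id]
  have hP2 : Pinv * Pmat = 1 := by
    rw [hPmat, hPinv, ← LinearMap.toMatrix_comp Bm bM' Bm, LinearMap.id_comp,
      LinearMap.toMatrix_id]
  set Qmat := LinearMap.toMatrix bQ' Bn LinearMap.id with hQmat
  set Qinv := LinearMap.toMatrix Bn bQ' LinearMap.id with hQinv
  have hQ1 : Qmat * Qinv = 1 := by
    rw [hQmat, hQinv, ← LinearMap.toMatrix_comp Bn bQ' Bn, LinearMap.id_comp,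
      LinearMap.toMatrix_id]
  have hQ2 : Qinv * Qmat = 1 := by
    rw [hQmat, hQinv, ← LinearMap.toMatrix_comp bQ' Bn bQ', LinearMap.id_comp,
      LinearMap.toMatrix_id]
  refine ⟨r, snf.a, ⟨Pmat, Pinv, hP1, hP2⟩, ⟨Qmat, Qinv, hQ1, hQ2⟩, hrm, by omega, ?_⟩
  show Pmat * M * Qmat = _
  rw [← hMmat, hPmat, ← LinearMap.toMatrix_comp Bn Bm bM', LinearMap.id_comp, hQmat,
    ← LinearMap.toMatrix_comp bQ' Bn bM', LinearMap.comp_id, hD]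



def sumPiAdd {ι ι' : Type*} (π : ι ⊕ ι' → Type*) [∀ x, AddCommGroup (π x)] :
    (∀ x, π x) ≃+ ((∀ i, π (Sum.inl i)) × (∀ i', π (Sum.inr i'))) :=
  { Equiv.sumPiEquivProdPi π with map_add' := fun _ _ => rfl }

def myE (m n : ℕ) (h : n ≤ m) : (Fin n ⊕ Fin (m - n)) ≃ Fin m :=
  finSumFinEquiv.trans (finCongr (by omega))

lemma myE_inl {m n : ℕ} (h : n ≤ m) (j : Fin n) : ((myE m n h (Sum.inl j) : Fin m) : ℕ) = j := by
  simp [myE]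

lemma myE_inr {m n : ℕ} (h : n ≤ m) (k : Fin (m - n)) :
    ((myE m n h (Sum.inr k) : Fin m) : ℕ) = n + k := by
  simp [myE]

noncomputable def splitEquiv {m n : ℕ} (d : List ℤ) (hmn : n ≤ m) (hlen : d.length ≤ n) :
    (∀ i : Fin m, ℤ ⧸ Ideal.span {dL d (i : ℕ)}) ≃+
      ((Fin (m - n) → ℤ) × ∀ j : Fin n, ℤ ⧸ Ideal.span {dL d (j : ℕ)}) := by
  have h1 : (∀ x : Fin n ⊕ Fin (m - n), ℤ ⧸ Ideal.span {dL d ((myE m n hmn x : Fin m) : ℕ)}) ≃ₗ[ℤ]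
      (∀ i : Fin m, ℤ ⧸ Ideal.span {dL d (i : ℕ)}) :=
    LinearEquiv.piCongrLeft ℤ (fun i : Fin m => ℤ ⧸ Ideal.span {dL d (i : ℕ)}) (myE m n hmn)
  have h2 := sumPiAdd
    (fun x : Fin n ⊕ Fin (m - n) => ℤ ⧸ Ideal.span {dL d ((myE m n hmn x : Fin m) : ℕ)})
  have hA : ∀ j : Fin n, (ℤ ⧸ Ideal.span {dL d ((myE m n hmn (Sum.inl j) : Fin m) : ℕ)}) ≃+
      (ℤ ⧸ Ideal.span {dL d ((j : Fin n) : ℕ)}) :=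
    fun j => (Submodule.quotEquivOfEq _ _ (by rw [myE_inl hmn j])).toAddEquiv
  have hB : ∀ k : Fin (m - n),
      (ℤ ⧸ Ideal.span {dL d ((myE m n hmn (Sum.inr k) : Fin m) : ℕ)}) ≃+ ℤ := by
    intro k
    have h0 : dL d ((myE m n hmn (Sum.inr k) : Fin m) : ℕ) = 0 := by
      rw [myE_inr hmn k, dL, dif_neg (by omega)]
    exact (Submodule.quotEquivOfEqBot _
      (by rw [h0, Ideal.span_singleton_eq_bot.mpr rfl])).toAddEquiv
  exact h1.symm.toAddEquiv.trans <| h2.trans <|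
    (AddEquiv.prodCongr (AddEquiv.piCongrRight hA) (AddEquiv.piCongrRight hB)).trans
      AddEquiv.prodComm


end Stmt4Aux

theorem stmt4 {m n : ℕ} (M : Matrix (Fin m) (Fin n) ℤ) (hmn : n ≤ m) :
    Nonempty (((Fin m → ℤ) ⧸ LinearMap.range M.mulVecLin) ≃+
      ((Fin (m - n) → ℤ) × ((Fin n → ℤ) ⧸ LinearMap.range Mᵀ.mulVecLin))) := by
  classical
  obtain ⟨r, a, P, Q, hrm, hrn, hPMQ⟩ := Stmt4Aux.exists_snf M
  set d := List.ofFn a with hd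
  have hlen : d.length = r := by simp [hd]
  -- transposed units
  set Pt : (Matrix (Fin m) (Fin m) ℤ)ˣ :=
    ⟨(P : Matrix (Fin m) (Fin m) ℤ)ᵀ, ((P⁻¹ : (Matrix (Fin m) (Fin m) ℤ)ˣ) : Matrix (Fin m) (Fin m) ℤ)ᵀ,
      by rw [← Matrix.transpose_mul, Units.inv_mul, Matrix.transpose_one],
      by rw [← Matrix.transpose_mul, Units.mul_inv, Matrix.transpose_one]⟩ with hPt
  set Qt : (Matrix (Fin n) (Fin n) ℤ)ˣ :=
    ⟨(Q : Matrix (Fin n) (Fin n) ℤ)ᵀ, ((Q⁻¹ : (Matrix (Fin n) (Fin n) ℤ)ˣ) : Matrix (Fin n) (Fin n) ℤ)ᵀ,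
      by rw [← Matrix.transpose_mul, Units.inv_mul, Matrix.transpose_one],
      by rw [← Matrix.transpose_mul, Units.mul_inv, Matrix.transpose_one]⟩ with hQt
  have hT : (Qt : Matrix (Fin n) (Fin n) ℤ) * Mᵀ * (Pt : Matrix (Fin m) (Fin m) ℤ) =
      SmithDiag n m d := by
    have := congrArg Matrix.transpose hPMQ
    rw [Matrix.transpose_mul, Matrix.transpose_mul, Stmt4Aux.smithDiag_transpose] at this
    rw [hQt, hPt]
    rw [← Matrix.mul_assoc] at this
    exact this
  have e1 := Stmt4Aux.cokerEquiv P Q hPMQ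
  have e2 := Stmt4Aux.cokerEquiv Qt Pt hT
  have e3 : ((Fin m → ℤ) ⧸ LinearMap.range (SmithDiag m n d).mulVecLin) ≃ₗ[ℤ]
      ∀ i : Fin m, ℤ ⧸ Ideal.span {Stmt4Aux.dL d (i : ℕ)} :=
    (Submodule.quotEquivOfEq _ _ (Stmt4Aux.range_smithDiag m n d (by omega))).trans
      (Submodule.quotientPi _)
  have e4 : ((Fin n → ℤ) ⧸ LinearMap.range (SmithDiag n m d).mulVecLin) ≃ₗ[ℤ]
      ∀ j : Fin n, ℤ ⧸ Ideal.span {Stmt4Aux.dL d (j : ℕ)} :=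
    (Submodule.quotEquivOfEq _ _ (Stmt4Aux.range_smithDiag n m d (by omega))).trans
      (Submodule.quotientPi _)
  have e5 := Stmt4Aux.splitEquiv d hmn (by omega)
  exact ⟨((e1.trans e3).toAddEquiv.trans e5).trans
    (AddEquiv.prodCongr (AddEquiv.refl _) ((e2.trans e4).toAddEquiv.symm))⟩
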